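/- Suppose α_cs/α_ls > max{1, β_cs/β_ls}. Then 𝒩₁(Θ) < 𝒩₂(Θ) for all Θ > 0. -/

import Mathlib

set_option maxHeartbeats 1000000


theorem stmt15_N1_lt_N2
    (asa aas aal alc als acs bls bcs ρ : ℝ)
    (hasa : 0 < asa) (haas : 0 < aas) (haal : 0 < aal) (halc : 0 < alc)
    (hals : 0 < als) (hacs : 0 < acs) (hbls : 0 < bls) (hbcs : 0 < bcs)
    (hρ : 0 < ρ) (hρ1 : ρ < 1)
    (hcond : max 1 (bcs / bls) < acs / als) :
    let η₁ := 1 / ((asa / (aas + aal)) * (1 + aal / als))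
    let ξ₁ := (aal * bls / (als * (aas + aal))) * (1 / ((asa / (aas + aal)) * (1 + aal / als)))
    let D := 1 + aal / (als + alc) + aal * alc / ((als + alc) * acs)
    let η₂ := (aas + aal) / (asa * D)
    let ξ₂ := (bls * aal / (alc + als) + bcs * aal * alc / (acs * (alc + als))) / (asa * D)
    let N₁ := fun Θ : ℝ => Θ / ρ + Θ * η₁ / (ρ * (1 + ξ₁ * Θ))
    let N₂ := fun Θ : ℝ => Θ / ρ + Θ * η₂ / (ρ * (1 + ξ₂ * Θ))
    ∀ Θ : ℝ, 0 < Θ → N₁ Θ < N₂ Θ := by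
  have h1 : als < acs := by
    have := (max_lt_iff.mp hcond).1
    exact (one_lt_div hals).mp this
  have h2 : bcs * als < bls * acs := by
    have := (max_lt_iff.mp hcond).2
    have := (div_lt_div_iff₀ hbls hals).mp this
    linarith
  intro η₁ ξ₁ D η₂ ξ₂ N₁ N₂ Θ hΘ
  have hD : 0 < D := by simp only [D]; positivity
  have hη₁ : 0 < η₁ := by simp only [η₁]; positivity
  have hη₂ : 0 < η₂ := by simp only [η₂]; positivity
  have hξ₁ : 0 < ξ₁ := by simp only [ξ₁]; positivity
  have hξ₂ : 0 < ξ₂ := by simp only [ξ₂]; positivity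
  have hη : η₁ < η₂ := by
    simp only [η₁, η₂, D]
    rw [div_lt_div_iff₀ (by positivity) (by positivity)]
    have hsum : (0:ℝ) < aas + aal := by positivity
    field_simp
    nlinarith [mul_pos (mul_pos haal halc) (sub_pos.mpr h1), mul_pos (mul_pos hasa (by positivity : (0:ℝ) < aas + aal)) (mul_pos (by positivity : (0:ℝ) < als + alc) (mul_pos haal (mul_pos halc (sub_pos.mpr h1))))]
  have hξ : η₁ * ξ₂ < η₂ * ξ₁ := by
    simp only [η₁, η₂, ξ₁, ξ₂, D]
    field_simp
    linarith [mul_pos halc (sub_pos.mpr h2), mul_pos (show (0:ℝ) < asa^2*(als+aal)*((als+alc)*((als+alc+aal)*acs+aal*alc))*(aas+aal)^2*als*aal*(als+alc)^3*acs*alc by positivity) (sub_pos.mpr h2)]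
  have hd₁ : 0 < ρ * (1 + ξ₁ * Θ) := by positivity
  have hd₂ : 0 < ρ * (1 + ξ₂ * Θ) := by positivity
  simp only [N₁, N₂]
  have : Θ * η₁ / (ρ * (1 + ξ₁ * Θ)) < Θ * η₂ / (ρ * (1 + ξ₂ * Θ)) := by
    rw [div_lt_div_iff₀ hd₁ hd₂]
    nlinarith [mul_pos (mul_pos hΘ hρ) (sub_pos.mpr hη), mul_pos (mul_pos (mul_pos hΘ hΘ) hρ) (sub_pos.mpr hξ)]
  linarith
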